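/- arXiv:2407.06661 — 5 statements merged into one kernel-verified Lean document; each statement's English description precedes it below -/
import Mathlib

section
/- Let $E$ be a real inner product space, let $N, D$ be natural numbers with $1 \le D < N$, and let $k^- < 0$ be a real number with $|k^-| < D/(N-D)$. Then there exists a constant $C > 0$ (depending only on $N$, $D$ and $k^-$) such that for all vectors $u_1, \dots, u_N \in E$: $\sum_{l=1}^{D} \|u_l\|^2 + |k^-| \sum_{l=D+1}^{N} \|u_l\|^2 + \frac{2 k^-}{D} \sum_{l=D+1}^{N} \sum_{j=1}^{D} \langle u_l, u_j \rangle \;\ge\; C \sum_{l=1}^{N} \|u_l\|^2$. -/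
open RealInnerProductSpace

/-- T-coercivity estimate for the two-phase star network, case `|k⁻| < D/(N-D)`. -/
theorem stmt_0 {E : Type*} [NormedAddCommGroup E] [InnerProductSpace ℝ E]
    (N D : ℕ) (hD : 1 ≤ D) (hDN : D < N)
    (kneg : ℝ) (hkneg : kneg < 0)
    (hsmall : |kneg| < (D : ℝ) / ((N : ℝ) - (D : ℝ))) :
    ∃ C : ℝ, 0 < C ∧ ∀ u : ℕ → E,
      (∑ l ∈ Finset.Icc 1 D, ‖u l‖ ^ 2)
        + |kneg| * (∑ l ∈ Finset.Icc (D + 1) N, ‖u l‖ ^ 2)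
        + (2 * kneg / (D : ℝ)) *
            (∑ l ∈ Finset.Icc (D + 1) N, ∑ j ∈ Finset.Icc 1 D, ⟪u l, u j⟫)
      ≥ C * ∑ l ∈ Finset.Icc 1 N, ‖u l‖ ^ 2 := by
  set a : ℝ := -kneg with ha
  have ha0 : 0 < a := by simp only [ha]; linarith
  have habs : |kneg| = a := abs_of_neg hkneg
  have hD0 : (0:ℝ) < D := by exact_mod_cast hD
  have hND : (0:ℝ) < (N:ℝ) - D := by
    have : (D:ℝ) < N := by exact_mod_cast hDN
    linarith
  have hkey : a * ((N:ℝ) - D) < D := by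
    rw [habs] at hsmall
    exact (lt_div_iff₀ hND).mp hsmall
  set t : ℝ := a * ((N:ℝ) - D) / D with ht
  have ht0 : 0 < t := div_pos (mul_pos ha0 hND) hD0
  have ht1 : t < 1 := (div_lt_one hD0).mpr hkey
  set ε : ℝ := (t + 1) / 2 with hεdef
  have htε : t < ε := by rw [hεdef]; linarith
  have hε1 : ε < 1 := by rw [hεdef]; linarith
  have hε0 : 0 < ε := by rw [hεdef]; linarith
  set c1 : ℝ := 1 - t / ε with hc1def
  set c2 : ℝ := a * (1 - ε) with hc2def
  have hc1 : 0 < c1 := by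
    have : t / ε < 1 := (div_lt_one hε0).mpr htε
    rw [hc1def]; linarith
  have hc2 : 0 < c2 := mul_pos ha0 (by linarith)
  refine ⟨min c1 c2, lt_min hc1 hc2, fun u => ?_⟩
  set A := Finset.Icc 1 D with hA
  set B := Finset.Icc (D + 1) N with hB
  set S1 : ℝ := ∑ l ∈ A, ‖u l‖ ^ 2 with hS1def
  set S2 : ℝ := ∑ l ∈ B, ‖u l‖ ^ 2 with hS2def
  have hS1 : 0 ≤ S1 := Finset.sum_nonneg fun _ _ => sq_nonneg _
  have hS2 : 0 ≤ S2 := Finset.sum_nonneg fun _ _ => sq_nonneg _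
  -- split the full sum
  have hsplit : ∑ l ∈ Finset.Icc 1 N, ‖u l‖ ^ 2 = S1 + S2 := by
    rw [hS1def, hS2def, hA, hB]
    rw [Finset.Icc_add_one_left_eq_Ioc,
      show Finset.Icc 1 N = Finset.Ioc 0 N from Finset.Icc_add_one_left_eq_Ioc (a := 0) (b := N),
      show Finset.Icc 1 D = Finset.Ioc 0 D from Finset.Icc_add_one_left_eq_Ioc (a := 0) (b := D)]
    exact (Finset.sum_Ioc_consecutive _ (Nat.zero_le D) hDN.le).symm
  -- bound the cross term
  have hcardA : (A.card : ℝ) = D := by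
    rw [hA, Nat.card_Icc]; simp
  have hcardB : (B.card : ℝ) = (N:ℝ) - D := by
    rw [hB, Nat.card_Icc]
    have : N + 1 - (D + 1) = N - D := by omega
    rw [this, Nat.cast_sub hDN.le]
  have hX : (∑ l ∈ B, ∑ j ∈ A, ⟪u l, u j⟫)
      ≤ ∑ l ∈ B, ∑ j ∈ A, (ε / 2 * ‖u l‖ ^ 2 + 1 / (2 * ε) * ‖u j‖ ^ 2) := by
    refine Finset.sum_le_sum fun l _ => Finset.sum_le_sum fun j _ => ?_
    have h1 : ⟪u l, u j⟫ ≤ ‖u l‖ * ‖u j‖ := real_inner_le_norm _ _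
    have h2 : ‖u l‖ * ‖u j‖ ≤ ε / 2 * ‖u l‖ ^ 2 + 1 / (2 * ε) * ‖u j‖ ^ 2 := by
      have key : 0 ≤ (ε * ‖u l‖ - ‖u j‖) ^ 2 := sq_nonneg _
      have e1 : 2 * ε * (ε / 2 * ‖u l‖ ^ 2 + 1 / (2 * ε) * ‖u j‖ ^ 2)
          = ε ^ 2 * ‖u l‖ ^ 2 + ‖u j‖ ^ 2 := by
        field_simp
      have h3 : 2 * ε * (‖u l‖ * ‖u j‖)
          ≤ 2 * ε * (ε / 2 * ‖u l‖ ^ 2 + 1 / (2 * ε) * ‖u j‖ ^ 2) := by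
        rw [e1]; nlinarith [key]
      exact le_of_mul_le_mul_left h3 (by positivity)
    linarith
  have e1 : ∀ l, ∑ j ∈ A, (ε / 2 * ‖u l‖ ^ 2 + 1 / (2 * ε) * ‖u j‖ ^ 2)
      = (D:ℝ) * ε / 2 * ‖u l‖ ^ 2 + 1 / (2 * ε) * S1 := by
    intro l
    rw [Finset.sum_add_distrib, Finset.sum_const, nsmul_eq_mul, hcardA, ← Finset.mul_sum,
      hS1def]
    ring
  have hXval : ∑ l ∈ B, ∑ j ∈ A, (ε / 2 * ‖u l‖ ^ 2 + 1 / (2 * ε) * ‖u j‖ ^ 2)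
      = ε / 2 * (D:ℝ) * S2 + 1 / (2 * ε) * ((N:ℝ) - D) * S1 := by
    rw [Finset.sum_congr rfl fun l _ => e1 l, Finset.sum_add_distrib, Finset.sum_const,
      nsmul_eq_mul, hcardB, ← Finset.mul_sum, hS2def]
    ring
  have hcross : (2 * kneg / (D:ℝ)) * (∑ l ∈ B, ∑ j ∈ A, ⟪u l, u j⟫)
      ≥ (2 * kneg / (D:ℝ)) * (ε / 2 * (D:ℝ) * S2 + 1 / (2 * ε) * ((N:ℝ) - D) * S1) := by
    rw [← hXval]
    apply mul_le_mul_of_nonpos_left (hX) _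
    apply div_nonpos_of_nonpos_of_nonneg (by linarith) hD0.le
  have hEq : S1 + a * S2 + (2 * kneg / (D:ℝ)) *
      (ε / 2 * (D:ℝ) * S2 + 1 / (2 * ε) * ((N:ℝ) - D) * S1) = c1 * S1 + c2 * S2 := by
    rw [hc1def, hc2def, ht, ha]
    field_simp
    ring
  have hfin : c1 * S1 + c2 * S2 ≥ min c1 c2 * (S1 + S2) := by
    have h1 : min c1 c2 * S1 ≤ c1 * S1 := mul_le_mul_of_nonneg_right (min_le_left _ _) hS1
    have h2 : min c1 c2 * S2 ≤ c2 * S2 := mul_le_mul_of_nonneg_right (min_le_right _ _) hS2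
    have h3 : min c1 c2 * (S1 + S2) = min c1 c2 * S1 + min c1 c2 * S2 := mul_add _ _ _
    linarith
  rw [habs, hsplit]
  calc min c1 c2 * (S1 + S2) ≤ c1 * S1 + c2 * S2 := hfin
    _ = S1 + a * S2 + (2 * kneg / (D:ℝ)) *
        (ε / 2 * (D:ℝ) * S2 + 1 / (2 * ε) * ((N:ℝ) - D) * S1) := hEq.symm
    _ ≤ S1 + a * S2 + (2 * kneg / (D:ℝ)) * (∑ l ∈ B, ∑ j ∈ A, ⟪u l, u j⟫) := by
        linarith [hcross]
end

section
/- Let $E$ be a real inner product space, let $N, D$ be natural numbers with $1 \le D < N$, and let $k^- < 0$ be a real number with $|k^-| > D/(N-D)$. Then there exists a constant $C > 0$ (depending only on $N$, $D$ and $k^-$) such that for all vectors $u_1, \dots, u_N \in E$: $\sum_{l=1}^{D} \|u_l\|^2 + |k^-| \sum_{l=D+1}^{N} \|u_l\|^2 - \frac{2}{N-D} \sum_{j=1}^{D} \sum_{l=D+1}^{N} \langle u_j, u_l \rangle \;\ge\; C \sum_{l=1}^{N} \|u_l\|^2$. -/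
open RealInnerProductSpace

set_option maxHeartbeats 800000 in
/-- T-coercivity estimate for the two-phase star network, case `|k⁻| > D/(N-D)`. -/
theorem stmt_1 {E : Type*} [NormedAddCommGroup E] [InnerProductSpace ℝ E]
    (N D : ℕ) (hD : 1 ≤ D) (hDN : D < N)
    (kneg : ℝ) (hkneg : kneg < 0)
    (hbig : |kneg| > (D : ℝ) / ((N : ℝ) - (D : ℝ))) :
    ∃ C : ℝ, 0 < C ∧ ∀ u : ℕ → E,
      (∑ l ∈ Finset.Icc 1 D, ‖u l‖ ^ 2)
        + |kneg| * (∑ l ∈ Finset.Icc (D + 1) N, ‖u l‖ ^ 2)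
        - (2 / ((N : ℝ) - (D : ℝ))) *
            (∑ j ∈ Finset.Icc 1 D, ∑ l ∈ Finset.Icc (D + 1) N, ⟪u j, u l⟫)
      ≥ C * ∑ l ∈ Finset.Icc 1 N, ‖u l‖ ^ 2 := by
  have hDN' : (D : ℝ) < N := by exact_mod_cast hDN
  have hM : (0:ℝ) < (N:ℝ) - D := by linarith
  have ha : (0:ℝ) < |kneg| := abs_pos.mpr (ne_of_lt hkneg)
  set a := |kneg| with ha_def
  set t : ℝ := (D:ℝ) / (((N:ℝ) - D) * a) with ht_def
  have ht0 : 0 ≤ t := by positivity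
  have ht1 : t < 1 := by
    rw [ht_def, div_lt_one (by positivity)]
    have h1 : (D:ℝ) = ((N:ℝ)-D) * ((D:ℝ)/((N:ℝ)-D)) := by field_simp
    calc (D:ℝ) = ((N:ℝ)-D) * ((D:ℝ)/((N:ℝ)-D)) := h1
    _ < ((N:ℝ)-D) * a := mul_lt_mul_of_pos_left hbig hM
  set ε : ℝ := (1 + t)/2 with hε_def
  have hε0 : 0 < ε := by rw [hε_def]; linarith
  have hε1 : ε < 1 := by rw [hε_def]; linarith
  have hεt : t < ε := by rw [hε_def]; linarith
  have hC2 : 0 < a - (D:ℝ)/(((N:ℝ)-D)*ε) := by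
    have h2 : (D:ℝ)/(((N:ℝ)-D)*ε) < a := by
      rw [div_lt_iff₀ (by positivity)]
      have h3 := (div_lt_iff₀ (by positivity : (0:ℝ) < ((N:ℝ)-D)*a)).mp hεt
      nlinarith [h3]
    linarith
  refine ⟨min (1-ε) (a - (D:ℝ)/(((N:ℝ)-D)*ε)), lt_min (by linarith) hC2, ?_⟩
  intro u
  set A := Finset.Icc 1 D with hA
  set B := Finset.Icc (D+1) N with hB
  set S1 := ∑ l ∈ A, ‖u l‖^2 with hS1
  set S2 := ∑ l ∈ B, ‖u l‖^2 with hS2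
  have hS1nn : 0 ≤ S1 := Finset.sum_nonneg (fun i _ => by positivity)
  have hS2nn : 0 ≤ S2 := Finset.sum_nonneg (fun i _ => by positivity)
  have hsplit : ∑ l ∈ Finset.Icc 1 N, ‖u l‖^2 = S1 + S2 := by
    rw [hS1, hS2, hA, hB, ← Finset.sum_union]
    · congr 1
      ext x
      simp only [Finset.mem_union, Finset.mem_Icc]
      omega
    · rw [Finset.disjoint_left]
      intro x hx hx'
      simp only [Finset.mem_Icc] at hx hx'
      omega
  have hcardA : ((A.card : ℝ)) = (D:ℝ) := by
    rw [hA, Nat.card_Icc]; norm_num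
  have hcardB : ((B.card : ℝ)) = (N:ℝ) - D := by
    rw [hB, Nat.card_Icc]
    have h : N + 1 - (D + 1) = N - D := by omega
    rw [h, Nat.cast_sub (le_of_lt hDN)]
  have hcross : ∑ j ∈ A, ∑ l ∈ B, ⟪u j, u l⟫
      ≤ (((N:ℝ)-D) * ε * S1 + (D:ℝ) * ε⁻¹ * S2) / 2 := by
    have step : ∀ j ∈ A, ∑ l ∈ B, ⟪u j, u l⟫
        ≤ ∑ l ∈ B, (ε * ‖u j‖^2 + ε⁻¹ * ‖u l‖^2)/2 := by
      intro j _
      apply Finset.sum_le_sum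
      intro l _
      have h1 : ⟪u j, u l⟫ ≤ ‖u j‖ * ‖u l‖ := real_inner_le_norm _ _
      have hεne : ε ≠ 0 := ne_of_gt hε0
      have h5 : 0 ≤ (ε*‖u j‖ - ‖u l‖)^2 := sq_nonneg _
      have h6 : 2*ε*(‖u j‖*‖u l‖) ≤ ε^2*‖u j‖^2 + ‖u l‖^2 := by nlinarith [h5]
      have h7 := mul_le_mul_of_nonneg_left h6 (le_of_lt (inv_pos.mpr hε0))
      have e1 : ε⁻¹ * (2*ε*(‖u j‖*‖u l‖)) = 2*(‖u j‖*‖u l‖) := by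
        field_simp
      have e2 : ε⁻¹ * (ε^2*‖u j‖^2 + ‖u l‖^2) = ε*‖u j‖^2 + ε⁻¹*‖u l‖^2 := by
        field_simp
      rw [e1, e2] at h7
      linarith [h1, h7]
    have e1 : ∀ j : ℕ, ∑ l ∈ B, (ε * ‖u j‖^2 + ε⁻¹ * ‖u l‖^2)/2
        = (B.card:ℝ) * (ε * ‖u j‖^2/2) + ε⁻¹/2 * S2 := by
      intro j
      calc ∑ l ∈ B, (ε * ‖u j‖^2 + ε⁻¹ * ‖u l‖^2)/2
          = ∑ l ∈ B, (ε * ‖u j‖^2/2 + ε⁻¹/2 * ‖u l‖^2) := by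
            apply Finset.sum_congr rfl; intro l _; ring
        _ = (B.card:ℝ) * (ε * ‖u j‖^2/2) + ε⁻¹/2 * S2 := by
            rw [Finset.sum_add_distrib, Finset.sum_const, nsmul_eq_mul, hS2,
              Finset.mul_sum]
    have e2 : ∑ j ∈ A, ∑ l ∈ B, (ε * ‖u j‖^2 + ε⁻¹ * ‖u l‖^2)/2
        = (((N:ℝ)-D) * ε * S1 + (D:ℝ) * ε⁻¹ * S2) / 2 := by
      calc ∑ j ∈ A, ∑ l ∈ B, (ε * ‖u j‖^2 + ε⁻¹ * ‖u l‖^2)/2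
          = ∑ j ∈ A, ((B.card:ℝ) * ε / 2 * ‖u j‖^2 + ε⁻¹/2 * S2) := by
            apply Finset.sum_congr rfl; intro j _; rw [e1 j]; ring
        _ = (B.card:ℝ) * ε / 2 * S1 + (A.card:ℝ) * (ε⁻¹/2 * S2) := by
            rw [Finset.sum_add_distrib, ← Finset.mul_sum, Finset.sum_const,
              nsmul_eq_mul, hS1]
        _ = (((N:ℝ)-D) * ε * S1 + (D:ℝ) * ε⁻¹ * S2) / 2 := by
            rw [hcardA, hcardB]; ring
    calc ∑ j ∈ A, ∑ l ∈ B, ⟪u j, u l⟫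
        ≤ ∑ j ∈ A, ∑ l ∈ B, (ε * ‖u j‖^2 + ε⁻¹ * ‖u l‖^2)/2 :=
          Finset.sum_le_sum step
      _ = (((N:ℝ)-D) * ε * S1 + (D:ℝ) * ε⁻¹ * S2) / 2 := e2
  have hmulcross : (2/((N:ℝ)-D)) * (∑ j ∈ A, ∑ l ∈ B, ⟪u j, u l⟫)
      ≤ (2/((N:ℝ)-D)) * ((((N:ℝ)-D) * ε * S1 + (D:ℝ) * ε⁻¹ * S2) / 2) :=
    mul_le_mul_of_nonneg_left hcross (by positivity)
  have hred : (2/((N:ℝ)-D)) * ((((N:ℝ)-D) * ε * S1 + (D:ℝ) * ε⁻¹ * S2) / 2)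
      = ε * S1 + ((D:ℝ)/(((N:ℝ)-D)*ε)) * S2 := by
    field_simp
  rw [hsplit]
  have hCle1 : min (1-ε) (a - (D:ℝ)/(((N:ℝ)-D)*ε)) ≤ 1-ε := min_le_left _ _
  have hCle2 : min (1-ε) (a - (D:ℝ)/(((N:ℝ)-D)*ε)) ≤ a - (D:ℝ)/(((N:ℝ)-D)*ε) :=
    min_le_right _ _
  have hp1 := mul_le_mul_of_nonneg_right hCle1 hS1nn
  have hp2 := mul_le_mul_of_nonneg_right hCle2 hS2nn
  rw [hred] at hmulcross
  linarith [hp1, hp2, hmulcross]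
end

section
/- Let $N, D$ be natural numbers with $1 \le D < N$, let $L > 0$, let $k^- < 0$ with $|k^-| \ne D/(N-D)$, and set $k_j = 1$ for $1 \le j \le D$ and $k_j = k^-$ for $D+1 \le j \le N$. Then for every tuple of continuous functions $f_j : [0,L] \to \mathbb{R}$ ($1 \le j \le N$) there exists a unique tuple $(\psi_1,\dots,\psi_N)$ of twice continuously differentiable functions $\psi_j : [0,L] \to \mathbb{R}$ satisfying: $-k_j \psi_j''(x) = f_j(x)$ for all $x \in [0,L]$ and all $j$; the Dirichlet conditions $\psi_j(0) = 0$ for all $j$; the continuity conditions $\psi_1(L) = \psi_2(L) = \cdots = \psi_N(L)$; and the Kirchhoff condition $\sum_{j=1}^{N} k_j \psi_j'(L) = 0$. -/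
open Set

lemma starAux_exists_ext {L : ℝ} {f : ℝ → ℝ} (hf : ContinuousOn f (Set.Icc 0 L)) :
    ∃ g : ℝ → ℝ, Continuous g ∧ ∀ x ∈ Set.Icc 0 L, g x = f x := by
  obtain ⟨g, hg⟩ := ContinuousMap.exists_restrict_eq (Y := ℝ) (isClosed_Icc (a := (0:ℝ)) (b := L))
    ⟨_, hf.restrict⟩
  refine ⟨g, g.continuous, fun x hx => ?_⟩
  exact congrFun (congrArg DFunLike.coe hg) ⟨x, hx⟩

lemma starAux_const {L : ℝ} {h : ℝ → ℝ}
    (hh : ∀ x ∈ Set.Icc 0 L, HasDerivWithinAt h 0 (Set.Icc 0 L) x) :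
    ∀ x ∈ Set.Icc 0 L, h x = h 0 := by
  have hcont : ContinuousOn h (Set.Icc 0 L) := fun x hx => (hh x hx).continuousWithinAt
  refine constant_of_has_deriv_right_zero hcont (fun x hx => ?_)
  refine (hh x (Ico_subset_Icc_self hx)).mono_of_mem_nhdsWithin ?_
  have h1 : Set.Iic L ∈ nhdsWithin x (Set.Ici x) :=
    mem_nhdsWithin_of_mem_nhds (Iic_mem_nhds hx.2)
  filter_upwards [h1, self_mem_nhdsWithin] with y hy1 hy2
  exact ⟨le_trans hx.1 hy2, hy1⟩

lemma starAux_linear {L : ℝ} {h : ℝ → ℝ} {c : ℝ}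
    (hh : ∀ x ∈ Set.Icc 0 L, HasDerivWithinAt h c (Set.Icc 0 L) x) :
    ∀ x ∈ Set.Icc 0 L, h x = h 0 + c * x := by
  have key := starAux_const (h := fun x => h x - c * x) (fun x hx => by
    have h' := (hh x hx).sub (((hasDerivAt_id x).const_mul c).hasDerivWithinAt)
    simp only [mul_one, sub_self] at h'
    exact h')
  intro x hx
  have hx0 := key x hx
  simp only [mul_zero, sub_zero] at hx0
  linarith


/-- The predicate saying that `ψ = (ψ_1, …, ψ_N)` is a classical solution of the
star-network problem with `N` edges of equal length `L`, conductivities `k j`,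
source terms `f j`, Dirichlet conditions at the external vertices `x = 0`,
and continuity plus Kirchhoff conditions at the internal vertex `x = L`. -/
def IsStarSolution (N : ℕ) (L : ℝ) (k : ℕ → ℝ) (f : ℕ → ℝ → ℝ) (ψ : ℕ → ℝ → ℝ) : Prop :=
  (∀ j ∈ Finset.Icc 1 N, ContDiffOn ℝ 2 (ψ j) (Set.Icc 0 L)) ∧
  (∀ j ∈ Finset.Icc 1 N, ∀ x ∈ Set.Icc 0 L,
      -(k j * iteratedDerivWithin 2 (ψ j) (Set.Icc 0 L) x) = f j x) ∧
  (∀ j ∈ Finset.Icc 1 N, ψ j 0 = 0) ∧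
  (∀ j ∈ Finset.Icc 1 N, ψ j L = ψ 1 L) ∧
  (∑ j ∈ Finset.Icc 1 N, k j * derivWithin (ψ j) (Set.Icc 0 L) L = 0)

/-- Well-posedness for an equilateral two-phase star network with Dirichlet boundary
conditions (Theorem 2.1): `D` edges of conductivity `1`, `N - D` edges of conductivity
`k⁻ < 0`, provided `|k⁻| ≠ D/(N-D)`. -/
theorem stmt_2 (N D : ℕ) (hD : 1 ≤ D) (hDN : D < N) (L : ℝ) (hL : 0 < L)
    (kneg : ℝ) (hkneg : kneg < 0)
    (hres : |kneg| ≠ (D : ℝ) / ((N : ℝ) - (D : ℝ)))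
    (k : ℕ → ℝ)
    (hk1 : ∀ j, 1 ≤ j → j ≤ D → k j = 1)
    (hk2 : ∀ j, D < j → j ≤ N → k j = kneg)
    (f : ℕ → ℝ → ℝ) (hf : ∀ j ∈ Finset.Icc 1 N, ContinuousOn (f j) (Set.Icc 0 L)) :
    ∃ ψ : ℕ → ℝ → ℝ, IsStarSolution N L k f ψ ∧
      ∀ φ : ℕ → ℝ → ℝ, IsStarSolution N L k f φ →
        ∀ j ∈ Finset.Icc 1 N, ∀ x ∈ Set.Icc (0 : ℝ) L, φ j x = ψ j x := by
  have hsUD : UniqueDiffOn ℝ (Set.Icc (0:ℝ) L) := uniqueDiffOn_Icc hL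
  -- continuous extensions of the data
  have hext : ∀ j, ∃ g : ℝ → ℝ, Continuous g ∧
      ∀ x ∈ Set.Icc (0:ℝ) L, j ∈ Finset.Icc 1 N → g x = f j x := by
    intro j
    by_cases hj : j ∈ Finset.Icc 1 N
    · obtain ⟨g, hgc, hgf⟩ := starAux_exists_ext (hf j hj)
      exact ⟨g, hgc, fun x hx _ => hgf x hx⟩
    · exact ⟨0, continuous_const, fun x _ hj' => absurd hj' hj⟩
  choose g hgc hgf using hext
  -- antiderivatives
  set G : ℕ → ℝ → ℝ := fun j x => ∫ t in (0:ℝ)..x, g j t with hGdef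
  have hGd : ∀ j x, HasDerivAt (G j) (g j x) x :=
    fun j x => ((hgc j).integral_hasStrictDerivAt 0 x).hasDerivAt
  have hGc : ∀ j, Continuous (G j) := fun j =>
    continuous_iff_continuousAt.2 fun x => (hGd j x).continuousAt
  set F : ℕ → ℝ → ℝ := fun j x => ∫ t in (0:ℝ)..x, G j t with hFdef
  have hFd : ∀ j x, HasDerivAt (F j) (G j x) x :=
    fun j x => ((hGc j).integral_hasStrictDerivAt 0 x).hasDerivAt
  have hF0 : ∀ j, F j 0 = 0 := fun j => intervalIntegral.integral_same
  -- nonvanishing of the conductivities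
  have hk0 : ∀ j ∈ Finset.Icc 1 N, k j ≠ 0 := by
    intro j hj
    rw [Finset.mem_Icc] at hj
    by_cases h : j ≤ D
    · rw [hk1 j hj.1 h]; norm_num
    · rw [hk2 j (not_le.1 h) hj.2]; exact ne_of_lt hkneg
  -- the total conductivity and its nonvanishing
  set S : ℝ := ∑ j ∈ Finset.Icc 1 N, k j with hSdef
  have hND : (0:ℝ) < (N:ℝ) - (D:ℝ) := by
    have : (D:ℝ) < (N:ℝ) := Nat.cast_lt.2 hDN
    linarith
  have hSval : S = (D:ℝ) + ((N:ℝ) - (D:ℝ)) * kneg := by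
    have hIcc : Finset.Icc 1 N = Finset.Ioc 0 N := by
      rw [← Finset.Icc_add_one_left_eq_Ioc]; rfl
    have hIccD : Finset.Icc 1 D = Finset.Ioc 0 D := by
      rw [← Finset.Icc_add_one_left_eq_Ioc]; rfl
    have hsplit : (∑ j ∈ Finset.Ioc 0 D, k j) + (∑ j ∈ Finset.Ioc D N, k j)
        = ∑ j ∈ Finset.Ioc 0 N, k j :=
      Finset.sum_Ioc_consecutive _ (Nat.zero_le D) (le_of_lt hDN)
    have h1 : (∑ j ∈ Finset.Ioc 0 D, k j) = (D:ℝ) := by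
      have e : ∀ j ∈ Finset.Ioc 0 D, k j = 1 := fun j hj => by
        rw [Finset.mem_Ioc] at hj; exact hk1 j hj.1 hj.2
      rw [Finset.sum_congr rfl e]
      simp [Nat.card_Ioc]
    have h2 : (∑ j ∈ Finset.Ioc D N, k j) = ((N:ℝ) - (D:ℝ)) * kneg := by
      have e : ∀ j ∈ Finset.Ioc D N, k j = kneg := fun j hj => by
        rw [Finset.mem_Ioc] at hj; exact hk2 j hj.1 hj.2
      rw [Finset.sum_congr rfl e, Finset.sum_const, Nat.card_Ioc, nsmul_eq_mul,
        Nat.cast_sub hDN.le]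
    rw [hSdef, hIcc, ← hsplit, h1, h2]
  have hS0 : S ≠ 0 := by
    rw [hSval]
    intro h
    apply hres
    rw [abs_of_neg hkneg, eq_div_iff (ne_of_gt hND)]
    nlinarith
  -- the solution
  set c : ℝ := (L * ∑ j ∈ Finset.Icc 1 N, G j L - ∑ j ∈ Finset.Icc 1 N, F j L) / S with hcdef
  set a : ℕ → ℝ := fun j => (c + F j L / k j) / L with hadef
  set ψ : ℕ → ℝ → ℝ := fun j x => a j * x - F j x / k j with hψdef
  set ψ' : ℕ → ℝ → ℝ := fun j x => a j - G j x / k j with hψ'def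
  have hψd : ∀ j x, HasDerivAt (ψ j) (ψ' j x) x := by
    intro j x
    have h1 : HasDerivAt (fun x => a j * x) (a j) x := by
      simpa using (hasDerivAt_id x).const_mul (a j)
    exact h1.sub ((hFd j x).div_const (k j))
  have hψ'd : ∀ j x, HasDerivAt (ψ' j) (-(g j x) / k j) x := by
    intro j x
    have h1 : HasDerivAt (fun x => G j x / k j) (g j x / k j) x := (hGd j x).div_const (k j)
    have := (hasDerivAt_const x (a j)).sub h1
    simp only [zero_sub] at this
    rw [neg_div]
    exact this
  -- smoothness
  have hψC : ∀ j, ContDiff ℝ 2 (ψ j) := by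
    intro j
    have hd1 : deriv (ψ j) = ψ' j := funext fun x => (hψd j x).deriv
    have hd2 : deriv (ψ' j) = fun x => -(g j x) / k j := funext fun x => (hψ'd j x).deriv
    rw [show (2 : WithTop ℕ∞) = 1 + 1 by norm_num, contDiff_succ_iff_deriv]
    refine ⟨fun x => (hψd j x).differentiableAt, by simp, ?_⟩
    rw [hd1, show (1 : WithTop ℕ∞) = 0 + 1 by norm_num, contDiff_succ_iff_deriv]
    refine ⟨fun x => (hψ'd j x).differentiableAt, by simp, ?_⟩
    rw [hd2, contDiff_zero]
    exact ((hgc j).neg).div_const _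
  -- derivWithin computations
  have hdW : ∀ j, Set.EqOn (derivWithin (ψ j) (Set.Icc 0 L)) (ψ' j) (Set.Icc 0 L) :=
    fun j x hx => (hψd j x).hasDerivWithinAt.derivWithin (hsUD x hx)
  have hIter : ∀ j, ∀ x ∈ Set.Icc (0:ℝ) L,
      iteratedDerivWithin 2 (ψ j) (Set.Icc 0 L) x = -(g j x) / k j := by
    intro j x hx
    rw [show (2:ℕ) = 1 + 1 from rfl, iteratedDerivWithin_succ]
    have e1 : Set.EqOn (iteratedDerivWithin 1 (ψ j) (Set.Icc 0 L)) (ψ' j) (Set.Icc 0 L) :=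
      fun y hy => by rw [iteratedDerivWithin_one]; exact hdW j hy
    rw [derivWithin_congr e1 (e1 hx)]
    exact (hψ'd j x).hasDerivWithinAt.derivWithin (hsUD x hx)
  -- boundary values
  have hψ0 : ∀ j, ψ j 0 = 0 := by
    intro j; simp [hψdef, hF0 j]
  have hψL : ∀ j ∈ Finset.Icc 1 N, ψ j L = c := by
    intro j hj
    have := hk0 j hj
    simp only [hψdef, hadef]
    field_simp
    ring
  have h1N : 1 ∈ Finset.Icc 1 N := Finset.mem_Icc.2 ⟨le_refl 1, le_trans hD hDN.le⟩
  -- Kirchhoff for ψ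
  have hKir : ∑ j ∈ Finset.Icc 1 N, k j * ψ' j L = 0 := by
    have hcS : c * S = L * (∑ j ∈ Finset.Icc 1 N, G j L) - ∑ j ∈ Finset.Icc 1 N, F j L :=
      div_mul_cancel₀ _ hS0
    have hterm : ∀ j ∈ Finset.Icc 1 N, k j * ψ' j L = (k j * c + F j L) / L - G j L := by
      intro j hj
      have hkj := hk0 j hj
      simp only [hψ'def, hadef]
      field_simp
    rw [Finset.sum_congr rfl hterm, Finset.sum_sub_distrib, ← Finset.sum_div,
      Finset.sum_add_distrib, ← Finset.sum_mul]
    rw [← hSdef]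
    rw [mul_comm S c, hcS]
    field_simp
    ring
  -- ψ is a solution
  have hSol : IsStarSolution N L k f ψ := by
    refine ⟨fun j _ => (hψC j).contDiffOn, ?_, fun j _ => hψ0 j, ?_, ?_⟩
    · intro j hj x hx
      rw [hIter j x hx, ← hgf j x hx hj]
      have := hk0 j hj
      field_simp
    · intro j hj
      rw [hψL j hj, hψL 1 h1N]
    · have e : ∑ j ∈ Finset.Icc 1 N, k j * derivWithin (ψ j) (Set.Icc 0 L) L
          = ∑ j ∈ Finset.Icc 1 N, k j * ψ' j L :=
        Finset.sum_congr rfl (fun j _ => by rw [hdW j (right_mem_Icc.2 hL.le)])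
      rw [e]
      exact hKir
  refine ⟨ψ, hSol, ?_⟩
  -- uniqueness
  intro φ hφ
  obtain ⟨hφC, hφE, hφ0, hφcont, hφK⟩ := hφ
  -- step 1: second derivatives agree
  have hIterφ : ∀ j ∈ Finset.Icc 1 N, ∀ x ∈ Set.Icc (0:ℝ) L,
      iteratedDerivWithin 2 (φ j) (Set.Icc 0 L) x = -(g j x) / k j := by
    intro j hj x hx
    have h1 := hφE j hj x hx
    have h2 := hSol.2.1 j hj x hx
    have hkj := hk0 j hj
    have : k j * iteratedDerivWithin 2 (φ j) (Set.Icc 0 L) x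
        = k j * iteratedDerivWithin 2 (ψ j) (Set.Icc 0 L) x := by linarith
    rw [← hIter j x hx]
    exact mul_left_cancel₀ hkj this
  -- step 2: derive the structure of φ j
  have key : ∀ j ∈ Finset.Icc 1 N, ∃ C : ℝ, (∀ x ∈ Set.Icc (0:ℝ) L, φ j x = ψ j x + C * x)
      ∧ derivWithin (φ j) (Set.Icc 0 L) L = ψ' j L + C := by
    intro j hj
    have hφC2 : ContDiffOn ℝ (1 + 1 : ℕ) (φ j) (Set.Icc 0 L) := by
      have := hφC j hj
      norm_num at this ⊢
      exact this
    have hsplit := (contDiffOn_succ_iff_derivWithin (n := 1) hsUD).1 (by exact_mod_cast hφC2)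
    have hφdiff : DifferentiableOn ℝ (φ j) (Set.Icc 0 L) := hsplit.1
    have hudiff : DifferentiableOn ℝ (derivWithin (φ j) (Set.Icc 0 L)) (Set.Icc 0 L) :=
      hsplit.2.2.differentiableOn one_ne_zero
    set u : ℝ → ℝ := derivWithin (φ j) (Set.Icc 0 L) with hudef
    -- iterated deriv of φ in terms of u
    have hIu : ∀ x ∈ Set.Icc (0:ℝ) L,
        derivWithin u (Set.Icc 0 L) x = -(g j x) / k j := by
      intro x hx
      rw [← hIterφ j hj x hx, show (2:ℕ) = 1 + 1 from rfl,
        iteratedDerivWithin_succ]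
      have e1 : Set.EqOn (iteratedDerivWithin 1 (φ j) (Set.Icc 0 L)) u (Set.Icc 0 L) :=
        fun y hy => congrFun iteratedDerivWithin_one y
      rw [derivWithin_congr e1 (e1 hx)]
    -- u - ψ' j is constant
    have hconst := starAux_const (h := fun x => u x - ψ' j x) (fun x hx => by
      have h1 : HasDerivWithinAt u (-(g j x) / k j) (Set.Icc 0 L) x := by
        have := (hudiff x hx).hasDerivWithinAt
        rwa [hIu x hx] at this
      have h' := h1.sub ((hψ'd j x).hasDerivWithinAt)
      simp only [sub_self] at h'
      exact h')
    set C : ℝ := u 0 - ψ' j 0 with hCdef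
    have huv : ∀ x ∈ Set.Icc (0:ℝ) L, u x = ψ' j x + C := by
      intro x hx
      have := hconst x hx
      linarith
    refine ⟨C, ?_, ?_⟩
    · have hlin := starAux_linear (h := fun x => φ j x - ψ j x) (c := C) (fun x hx => by
        have h1 : HasDerivWithinAt (φ j) (u x) (Set.Icc 0 L) x := (hφdiff x hx).hasDerivWithinAt
        have h2 : HasDerivWithinAt (ψ j) (ψ' j x) (Set.Icc 0 L) x :=
          (hψd j x).hasDerivWithinAt
        have h3 := h1.sub h2
        rwa [huv x hx, add_sub_cancel_left] at h3)
      intro x hx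
      have := hlin x hx
      rw [hφ0 j hj, hψ0 j] at this
      linarith
    · have := huv L (right_mem_Icc.2 hL.le)
      exact this
  choose! C hC1 hC2 using key
  -- continuity of potentials at the junction forces all C j equal
  have hCeq : ∀ j ∈ Finset.Icc 1 N, C j = C 1 := by
    intro j hj
    have e1 : φ j L = ψ j L + C j * L := hC1 j hj L (right_mem_Icc.2 hL.le)
    have e2 : φ 1 L = ψ 1 L + C 1 * L := hC1 1 h1N L (right_mem_Icc.2 hL.le)
    have e3 : φ j L = φ 1 L := hφcont j hj
    have e4 : ψ j L = ψ 1 L := by rw [hψL j hj, hψL 1 h1N]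
    have : C j * L = C 1 * L := by linarith
    exact mul_right_cancel₀ (ne_of_gt hL) this
  -- Kirchhoff forces C 1 = 0
  have hC10 : C 1 = 0 := by
    have hsum : ∑ j ∈ Finset.Icc 1 N, k j * (ψ' j L + C 1) = 0 := by
      rw [← hφK]
      exact Finset.sum_congr rfl (fun j hj => by rw [hC2 j hj, hCeq j hj])
    have e : ∑ j ∈ Finset.Icc 1 N, k j * (ψ' j L + C 1)
        = ∑ j ∈ Finset.Icc 1 N, (k j * ψ' j L + k j * C 1) :=
      Finset.sum_congr rfl (fun j _ => by ring)
    rw [e, Finset.sum_add_distrib, hKir, zero_add, ← Finset.sum_mul, ← hSdef] at hsum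
    exact (mul_eq_zero.1 hsum).resolve_left hS0
  intro j hj x hx
  rw [hC1 j hj x hx, hCeq j hj, hC10, zero_mul, add_zero]
end

section
/- Let $N, D$ be natural numbers with $1 \le D < N$, let $L > 0$, and for each $1 \le l \le N$ let $k_l : [0,L] \to \mathbb{R}$ be continuous with $k_l > 0$ for $l \le D$ and $k_l < 0$ for $l > D$, and let $I_l, S_l > 0$ satisfy $I_l \le |k_l(x)| \le S_l$ for all $x \in [0,L]$. Assume $\big(\max_{D+1 \le l \le N} S_l\big) \big(\sum_{l=1}^{D} 1/I_l\big) < \frac{D^2}{N-D}$. Then there exists $C > 0$ such that for all continuous functions $g_1, \dots, g_N : [0,L] \to \mathbb{R}$: $\sum_{l=1}^{N} \int_0^L |k_l(x)| g_l(x)^2 \, dx \; - \; \frac{2}{D} \sum_{l=D+1}^{N} \sum_{j=1}^{D} \int_0^L |k_l(x)| g_l(x) g_j(x) \, dx \;\ge\; C \sum_{l=1}^{N} \int_0^L g_l(x)^2 \, dx$. -/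
private lemma key_pointwise (N D : ℕ) (hD : 1 ≤ D) (hDN : D < N)
    (I t : ℕ → ℝ) (M C : ℝ)
    (hI0 : ∀ l ∈ Finset.Icc 1 N, 0 ≤ I l)
    (ht : ∀ j ∈ Finset.Icc 1 D, 0 < t j)
    (hT : (∑ j ∈ Finset.Icc 1 D, t j) ≤ D)
    (hCj : ∀ j ∈ Finset.Icc 1 D, C ≤ I j - ((N:ℝ) - D) * M / (D * t j))
    (hCl : ∀ l ∈ Finset.Icc (D+1) N,
        C ≤ (1 - (∑ j ∈ Finset.Icc 1 D, t j) / D) * I l)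
    (κ a : ℕ → ℝ)
    (hκI : ∀ l ∈ Finset.Icc 1 N, I l ≤ κ l)
    (hκM : ∀ l ∈ Finset.Icc (D+1) N, κ l ≤ M) :
    C * (∑ l ∈ Finset.Icc 1 N, a l ^ 2) ≤
    (∑ l ∈ Finset.Icc 1 N, κ l * a l ^ 2)
      - (2 / (D:ℝ)) * (∑ l ∈ Finset.Icc (D+1) N, ∑ j ∈ Finset.Icc 1 D,
          κ l * a l * a j) := by
  have hD0 : (0:ℝ) < D := by exact_mod_cast hD
  have hsub1 : Finset.Icc 1 D ⊆ Finset.Icc 1 N := Finset.Icc_subset_Icc_right hDN.le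
  have hsub2 : Finset.Icc (D+1) N ⊆ Finset.Icc 1 N := Finset.Icc_subset_Icc_left (by omega)
  set T := ∑ j ∈ Finset.Icc 1 D, t j with hTdef
  have hκ0 : ∀ l ∈ Finset.Icc 1 N, 0 ≤ κ l := fun l hl => (hI0 l hl).trans (hκI l hl)
  -- cross term bound
  have hcross : (2 / (D:ℝ)) * (∑ l ∈ Finset.Icc (D+1) N, ∑ j ∈ Finset.Icc 1 D,
        κ l * a l * a j)
      ≤ (∑ l ∈ Finset.Icc (D+1) N, (T / D) * (κ l * a l ^ 2))
        + (∑ j ∈ Finset.Icc 1 D, (((N:ℝ) - D) * M / (D * t j)) * a j ^ 2) := by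
    have step1 : (2 / (D:ℝ)) * (∑ l ∈ Finset.Icc (D+1) N, ∑ j ∈ Finset.Icc 1 D,
          κ l * a l * a j)
        = ∑ l ∈ Finset.Icc (D+1) N, ∑ j ∈ Finset.Icc 1 D,
            (2 / (D:ℝ)) * (κ l * a l * a j) := by
      rw [Finset.mul_sum]; exact Finset.sum_congr rfl fun l _ => Finset.mul_sum _ _ _
    rw [step1]
    have step2 : ∀ l ∈ Finset.Icc (D+1) N, ∀ j ∈ Finset.Icc 1 D,
        (2 / (D:ℝ)) * (κ l * a l * a j)
          ≤ (t j / D) * (κ l * a l ^ 2) + (M / (D * t j)) * a j ^ 2 := by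
      intro l hl j hj
      have htj := ht j hj
      have hκl := hκ0 l (hsub2 hl)
      have hκMl := hκM l hl
      have h1 : 2 * (a l * a j) - t j * a l ^ 2 ≤ a j ^ 2 / t j := by
        rw [le_div_iff₀ htj]; nlinarith [sq_nonneg (t j * a l - a j)]
      have h2 : κ l * (2 * (a l * a j)) ≤ κ l * (t j * a l ^ 2 + a j ^ 2 / t j) :=
        mul_le_mul_of_nonneg_left (by linarith) hκl
      have h3 : κ l * (a j ^ 2 / t j) ≤ M * (a j ^ 2 / t j) :=
        mul_le_mul_of_nonneg_right hκMl (by positivity)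
      have h4 : κ l * (2 * (a l * a j)) ≤ t j * (κ l * a l ^ 2) + M * (a j ^ 2 / t j) := by
        nlinarith
      have hDinv : (0:ℝ) ≤ 1 / D := by positivity
      have h5 := mul_le_mul_of_nonneg_left h4 hDinv
      calc (2 / (D:ℝ)) * (κ l * a l * a j)
          = (1 / (D:ℝ)) * (κ l * (2 * (a l * a j))) := by ring
        _ ≤ (1 / (D:ℝ)) * (t j * (κ l * a l ^ 2) + M * (a j ^ 2 / t j)) := h5
        _ = (t j / D) * (κ l * a l ^ 2) + (M / (D * t j)) * a j ^ 2 := by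
            field_simp
    calc ∑ l ∈ Finset.Icc (D+1) N, ∑ j ∈ Finset.Icc 1 D,
            (2 / (D:ℝ)) * (κ l * a l * a j)
        ≤ ∑ l ∈ Finset.Icc (D+1) N, ∑ j ∈ Finset.Icc 1 D,
            ((t j / D) * (κ l * a l ^ 2) + (M / (D * t j)) * a j ^ 2) := by
          refine Finset.sum_le_sum fun l hl => Finset.sum_le_sum fun j hj => step2 l hl j hj
      _ = ∑ l ∈ Finset.Icc (D+1) N, ((T / D) * (κ l * a l ^ 2)
            + ∑ j ∈ Finset.Icc 1 D, (M / (D * t j)) * a j ^ 2) := by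
          refine Finset.sum_congr rfl fun l _ => ?_
          rw [Finset.sum_add_distrib]
          congr 1
          rw [← Finset.sum_mul, ← Finset.sum_div]
      _ = (∑ l ∈ Finset.Icc (D+1) N, (T / D) * (κ l * a l ^ 2))
            + (↑(N - D) : ℝ) * ∑ j ∈ Finset.Icc 1 D, (M / (D * t j)) * a j ^ 2 := by
          have hcard : N + 1 - (D+1) = N - D := by omega
          rw [Finset.sum_add_distrib, Finset.sum_const, Nat.card_Icc, hcard, nsmul_eq_mul]
      _ = (∑ l ∈ Finset.Icc (D+1) N, (T / D) * (κ l * a l ^ 2))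
            + (∑ j ∈ Finset.Icc 1 D, (((N:ℝ) - D) * M / (D * t j)) * a j ^ 2) := by
          congr 1
          rw [Finset.mul_sum, Nat.cast_sub hDN.le]
          exact Finset.sum_congr rfl fun j _ => by ring
  have hdisj : Disjoint (Finset.Icc 1 D) (Finset.Icc (D+1) N) := by
    simp only [Finset.disjoint_left, Finset.mem_Icc]; omega
  have hunion : Finset.Icc 1 D ∪ Finset.Icc (D+1) N = Finset.Icc 1 N := by
    ext x; simp only [Finset.mem_union, Finset.mem_Icc]; omega
  have hsplit : ∀ f : ℕ → ℝ, ∑ l ∈ Finset.Icc 1 N, f l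
      = ∑ l ∈ Finset.Icc 1 D, f l + ∑ l ∈ Finset.Icc (D+1) N, f l := by
    intro f; rw [← hunion, Finset.sum_union hdisj]
  have hA : ∑ j ∈ Finset.Icc 1 D, C * a j ^ 2
      ≤ ∑ j ∈ Finset.Icc 1 D,
          (κ j * a j ^ 2 - (((N:ℝ) - D) * M / (D * t j)) * a j ^ 2) := by
    refine Finset.sum_le_sum fun j hj => ?_
    have h1 := hCj j hj
    have h2 := hκI j (hsub1 hj)
    nlinarith [mul_nonneg (show (0:ℝ) ≤ κ j - ((N:ℝ) - D) * M / (D * t j) - C by linarith)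
        (sq_nonneg (a j))]
  have hB : ∑ l ∈ Finset.Icc (D+1) N, C * a l ^ 2
      ≤ ∑ l ∈ Finset.Icc (D+1) N,
          (κ l * a l ^ 2 - (T / D) * (κ l * a l ^ 2)) := by
    refine Finset.sum_le_sum fun l hl => ?_
    have h1 := hCl l hl
    have h2 := hκI l (hsub2 hl)
    have h3 := hI0 l (hsub2 hl)
    have hTD : 0 ≤ 1 - T / D := by
      have : T / D ≤ 1 := by rw [div_le_one hD0]; exact hT
      linarith
    have h4 : (1 - T / D) * I l ≤ (1 - T / D) * κ l := mul_le_mul_of_nonneg_left h2 hTD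
    have h5 : C ≤ (1 - T / D) * κ l := le_trans h1 h4
    nlinarith [mul_nonneg (show (0:ℝ) ≤ (1 - T / D) * κ l - C by linarith) (sq_nonneg (a l))]
  rw [Finset.sum_sub_distrib] at hA hB
  rw [← Finset.mul_sum] at hA hB
  rw [hsplit (fun l => a l ^ 2), hsplit (fun l => κ l * a l ^ 2), mul_add]
  linarith

/-- T-coercivity estimate for general multiphase equilateral star networks
(Theorem 2.3, first case). -/
theorem stmt_4 (N D : ℕ) (hD : 1 ≤ D) (hDN : D < N) (L : ℝ) (hL : 0 < L)
    (k : ℕ → ℝ → ℝ)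
    (hkc : ∀ l ∈ Finset.Icc 1 N, ContinuousOn (k l) (Set.Icc 0 L))
    (hkpos : ∀ l ∈ Finset.Icc 1 D, ∀ x ∈ Set.Icc (0 : ℝ) L, 0 < k l x)
    (hkneg : ∀ l ∈ Finset.Icc (D + 1) N, ∀ x ∈ Set.Icc (0 : ℝ) L, k l x < 0)
    (I S : ℕ → ℝ)
    (hI : ∀ l ∈ Finset.Icc 1 N, 0 < I l) (hS : ∀ l ∈ Finset.Icc 1 N, 0 < S l)
    (hbound : ∀ l ∈ Finset.Icc 1 N, ∀ x ∈ Set.Icc (0 : ℝ) L,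
        I l ≤ |k l x| ∧ |k l x| ≤ S l)
    (hmax : ((Finset.Icc (D + 1) N).sup' (Finset.nonempty_Icc.mpr (by omega)) S) *
        (∑ l ∈ Finset.Icc 1 D, 1 / I l) < (D : ℝ) ^ 2 / ((N : ℝ) - (D : ℝ))) :
    ∃ C : ℝ, 0 < C ∧ ∀ g : ℕ → ℝ → ℝ,
      (∀ l ∈ Finset.Icc 1 N, ContinuousOn (g l) (Set.Icc 0 L)) →
      (∑ l ∈ Finset.Icc 1 N, ∫ x in (0 : ℝ)..L, |k l x| * (g l x) ^ 2)
        - (2 / (D : ℝ)) * (∑ l ∈ Finset.Icc (D + 1) N, ∑ j ∈ Finset.Icc 1 D,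
            ∫ x in (0 : ℝ)..L, |k l x| * g l x * g j x)
      ≥ C * ∑ l ∈ Finset.Icc 1 N, ∫ x in (0 : ℝ)..L, (g l x) ^ 2 := by
  have hD0 : (0:ℝ) < D := by exact_mod_cast hD
  have hND : (D:ℝ) < N := by exact_mod_cast hDN
  have hsub1 : Finset.Icc 1 D ⊆ Finset.Icc 1 N := Finset.Icc_subset_Icc_right hDN.le
  have hsub2 : Finset.Icc (D+1) N ⊆ Finset.Icc 1 N := Finset.Icc_subset_Icc_left (by omega)
  have hne : (Finset.Icc (D+1) N).Nonempty := Finset.nonempty_Icc.mpr (by omega)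
  set M : ℝ := (Finset.Icc (D + 1) N).sup' (Finset.nonempty_Icc.mpr (by omega)) S with hMdef
  have hMub : ∀ l ∈ Finset.Icc (D+1) N, S l ≤ M := fun l hl => Finset.le_sup' S hl
  have hM0 : 0 < M := by
    obtain ⟨l0, hl0⟩ := hne
    exact lt_of_lt_of_le (hS l0 (hsub2 hl0)) (hMub l0 hl0)
  set T0 : ℝ := ∑ j ∈ Finset.Icc 1 D, 1 / I j with hT0def
  have hT0 : 0 < T0 :=
    Finset.sum_pos (fun j hj => one_div_pos.mpr (hI j (hsub1 hj)))
      (Finset.nonempty_Icc.mpr hD)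
  set Q : ℝ := ((N:ℝ) - D) * M * T0 / D with hQdef
  have hQ0 : 0 < Q := by
    have : (0:ℝ) < (N:ℝ) - D := by linarith
    positivity
  have hQD : Q < D := by
    have h1 : M * T0 < (D:ℝ) ^ 2 / ((N:ℝ) - D) := hmax
    have h2 : (0:ℝ) < (N:ℝ) - D := by linarith
    rw [lt_div_iff₀ h2] at h1
    rw [hQdef, div_lt_iff₀ hD0]
    nlinarith
  set θ : ℝ := (Q + D) / (2 * Q) with hθdef
  have hθ1 : 1 < θ := by
    rw [hθdef, lt_div_iff₀ (by positivity)]; linarith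
  have hθ0 : 0 < θ := lt_trans one_pos hθ1
  have hθQ : θ * Q = (Q + D) / 2 := by
    rw [hθdef]; field_simp
  set t : ℕ → ℝ := fun j => θ * (((N:ℝ) - D) * M) / (D * I j) with htdef
  have ht : ∀ j ∈ Finset.Icc 1 D, 0 < t j := by
    intro j hj
    have hIj := hI j (hsub1 hj)
    have h' : (0:ℝ) < (N:ℝ) - D := by linarith
    rw [htdef]
    positivity
  have hTsum : (∑ j ∈ Finset.Icc 1 D, t j) = θ * Q := by
    have e : ∀ j ∈ Finset.Icc 1 D, t j = (θ * (((N:ℝ) - D) * M) / D) * (1 / I j) := by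
      intro j hj; rw [htdef]; ring
    rw [Finset.sum_congr rfl e, ← Finset.mul_sum, ← hT0def, hQdef]
    ring
  have hT : (∑ j ∈ Finset.Icc 1 D, t j) ≤ D := by
    rw [hTsum, hθQ]; linarith
  have hcoef : ∀ j ∈ Finset.Icc 1 D,
      I j - ((N:ℝ) - D) * M / (D * t j) = (1 - 1/θ) * I j := by
    intro j hj
    have hIj := hI j (hsub1 hj)
    have hND0 : (0:ℝ) < (N:ℝ) - D := by linarith
    have hIj' : I j ≠ 0 := hIj.ne'
    have hNDne : ((N:ℝ) - D) ≠ 0 := hND0.ne'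
    rw [htdef]
    field_simp
  set Imin : ℝ := (Finset.Icc 1 N).inf' (Finset.nonempty_Icc.mpr (by omega)) I with hImdef
  have hImin0 : 0 < Imin := by
    rw [hImdef, Finset.lt_inf'_iff]
    exact fun l hl => hI l hl
  have hImin_le : ∀ l ∈ Finset.Icc 1 N, Imin ≤ I l := fun l hl => Finset.inf'_le I hl
  set ε : ℝ := min (1 - 1/θ) (1 - θ * Q / D) with hεdef
  have hε1 : 0 < 1 - 1/θ := by
    have : 1/θ < 1 := by rw [div_lt_one hθ0]; exact hθ1
    linarith
  have hε2 : 0 < 1 - θ * Q / D := by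
    rw [hθQ]
    have : (Q + D) / 2 / D < 1 := by
      rw [div_lt_one hD0]; linarith
    linarith
  have hε0 : 0 < ε := lt_min hε1 hε2
  refine ⟨ε * Imin, by positivity, ?_⟩
  intro g hg
  set C := ε * Imin with hCdef
  have hC0 : 0 < C := by positivity
  have hCj : ∀ j ∈ Finset.Icc 1 D, C ≤ I j - ((N:ℝ) - D) * M / (D * t j) := by
    intro j hj
    rw [hcoef j hj]
    exact mul_le_mul (min_le_left _ _) (hImin_le j (hsub1 hj)) hImin0.le hε1.le
  have hCl : ∀ l ∈ Finset.Icc (D+1) N,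
      C ≤ (1 - (∑ j ∈ Finset.Icc 1 D, t j) / D) * I l := by
    intro l hl
    rw [hTsum]
    exact mul_le_mul (min_le_right _ _) (hImin_le l (hsub2 hl)) hImin0.le hε2.le
  have huIcc : Set.uIcc (0:ℝ) L = Set.Icc 0 L := Set.uIcc_of_le hL.le
  have hii : ∀ f : ℝ → ℝ, ContinuousOn f (Set.Icc 0 L) →
      IntervalIntegrable f MeasureTheory.volume 0 L := by
    intro f hf
    exact (hf.mono (by rw [huIcc])).intervalIntegrable
  have hc1 : ∀ l ∈ Finset.Icc 1 N,
      ContinuousOn (fun x => |k l x| * g l x ^ 2) (Set.Icc 0 L) :=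
    fun l hl => (hkc l hl).abs.mul ((hg l hl).pow 2)
  have hc2 : ∀ l ∈ Finset.Icc (D+1) N, ∀ j ∈ Finset.Icc 1 D,
      ContinuousOn (fun x => |k l x| * g l x * g j x) (Set.Icc 0 L) :=
    fun l hl j hj => (((hkc l (hsub2 hl)).abs.mul (hg l (hsub2 hl))).mul (hg j (hsub1 hj)))
  have hc3 : ∀ l ∈ Finset.Icc 1 N, ContinuousOn (fun x => g l x ^ 2) (Set.Icc 0 L) :=
    fun l hl => (hg l hl).pow 2
  have hc2' : ∀ l ∈ Finset.Icc (D+1) N,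
      ContinuousOn (fun x => ∑ j ∈ Finset.Icc 1 D, |k l x| * g l x * g j x)
        (Set.Icc 0 L) := by
    intro l hl
    exact continuousOn_finset_sum _ (fun j hj => hc2 l hl j hj)
  have eA : (∑ l ∈ Finset.Icc 1 N, ∫ x in (0:ℝ)..L, |k l x| * (g l x) ^ 2)
      = ∫ x in (0:ℝ)..L, ∑ l ∈ Finset.Icc 1 N, |k l x| * (g l x) ^ 2 :=
    (intervalIntegral.integral_finset_sum (fun l hl => hii _ (hc1 l hl))).symm
  have eB : (∑ l ∈ Finset.Icc (D+1) N, ∑ j ∈ Finset.Icc 1 D,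
        ∫ x in (0:ℝ)..L, |k l x| * g l x * g j x)
      = ∫ x in (0:ℝ)..L, ∑ l ∈ Finset.Icc (D+1) N, ∑ j ∈ Finset.Icc 1 D,
          |k l x| * g l x * g j x := by
    have inner : ∀ l ∈ Finset.Icc (D+1) N,
        (∑ j ∈ Finset.Icc 1 D, ∫ x in (0:ℝ)..L, |k l x| * g l x * g j x)
          = ∫ x in (0:ℝ)..L, ∑ j ∈ Finset.Icc 1 D, |k l x| * g l x * g j x :=
      fun l hl =>
        (intervalIntegral.integral_finset_sum (fun j hj => hii _ (hc2 l hl j hj))).symm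
    rw [Finset.sum_congr rfl inner]
    exact (intervalIntegral.integral_finset_sum (fun l hl => hii _ (hc2' l hl))).symm
  have eR : (∑ l ∈ Finset.Icc 1 N, ∫ x in (0:ℝ)..L, (g l x) ^ 2)
      = ∫ x in (0:ℝ)..L, ∑ l ∈ Finset.Icc 1 N, (g l x) ^ 2 :=
    (intervalIntegral.integral_finset_sum (fun l hl => hii _ (hc3 l hl))).symm
  rw [eA, eB, eR, ← intervalIntegral.integral_const_mul,
    ← intervalIntegral.integral_const_mul, ← intervalIntegral.integral_sub]
  · rw [ge_iff_le]
    refine intervalIntegral.integral_mono_on hL.le ?_ ?_ ?_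
    · exact hii _ (continuousOn_const.mul
        (continuousOn_finset_sum _ (fun l hl => hc3 l hl)))
    · refine IntervalIntegrable.sub ?_ ?_
      · exact hii _ (continuousOn_finset_sum _ (fun l hl => hc1 l hl))
      · exact hii _ (continuousOn_const.mul
          (continuousOn_finset_sum _ (fun l hl => hc2' l hl)))
    · intro x hx
      refine key_pointwise N D hD hDN I t M C
        (fun l hl => (hI l hl).le) ht hT hCj hCl
        (fun l => |k l x|) (fun l => g l x)
        (fun l hl => (hbound l hl x hx).1)
        (fun l hl => le_trans (hbound l (hsub2 hl) x hx).2 (hMub l hl))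
  · exact hii _ (continuousOn_finset_sum _ (fun l hl => hc1 l hl))
  · exact hii _ (continuousOn_const.mul
      (continuousOn_finset_sum _ (fun l hl => hc2' l hl)))
end

section
/- Let $N, D$ be natural numbers with $1 \le D < N$, let $L > 0$, and for each $1 \le l \le N$ let $k_l : [0,L] \to \mathbb{R}$ be continuous with $k_l > 0$ for $l \le D$ and $k_l < 0$ for $l > D$, and let $I_l, S_l > 0$ satisfy $I_l \le |k_l(x)| \le S_l$ for all $x \in [0,L]$. Assume $\big(\max_{1 \le l \le D} S_l\big) \big(\sum_{l=D+1}^{N} 1/I_l\big) < \frac{(N-D)^2}{D}$. Then there exists $C > 0$ such that for all continuous functions $g_1, \dots, g_N : [0,L] \to \mathbb{R}$: $\sum_{l=1}^{N} \int_0^L |k_l(x)| g_l(x)^2 \, dx \; - \; \frac{2}{N-D} \sum_{l=1}^{D} \sum_{j=D+1}^{N} \int_0^L |k_l(x)| g_l(x) g_j(x) \, dx \;\ge\; C \sum_{l=1}^{N} \int_0^L g_l(x)^2 \, dx$. -/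
open Finset intervalIntegral

private lemma amgm_div (e u v : ℝ) (he : 0 < e) : 2 * (u * v) ≤ u ^ 2 / e + e * v ^ 2 := by
  rw [div_add' _ _ _ he.ne', le_div_iff₀ he]
  nlinarith [sq_nonneg (u - e * v)]

private lemma pointwise_key (P Q : Finset ℕ) (a u I : ℕ → ℝ) (M t C ND r : ℝ)
    (hND : 0 < ND) (hM : 0 < M) (ht : 0 < t) (hDc : 0 < (P.card : ℝ))
    (hr : r = (P.card : ℝ) * M * (∑ j ∈ Q, 1 / I j) / ND ^ 2)
    (ha : ∀ l ∈ P, 0 ≤ a l) (haM : ∀ l ∈ P, a l ≤ M)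
    (haIP : ∀ l ∈ P, I l ≤ a l) (haIQ : ∀ j ∈ Q, I j ≤ a j)
    (hIQ : ∀ j ∈ Q, 0 < I j)
    (hrt : 0 ≤ 1 - r / t)
    (hC1 : ∀ l ∈ P, C ≤ (1 - r / t) * I l)
    (hC2 : ∀ j ∈ Q, C ≤ (1 - t) * I j) :
    (∑ l ∈ P, a l * u l ^ 2 + ∑ j ∈ Q, a j * u j ^ 2)
      - (2 / ND) * ∑ l ∈ P, ∑ j ∈ Q, a l * u l * u j
      ≥ C * (∑ l ∈ P, u l ^ 2 + ∑ j ∈ Q, u j ^ 2) := by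
  set Dc : ℝ := (P.card : ℝ) with hDcdef
  have hC1' : ∀ l ∈ P, C * u l ^ 2 ≤ (1 - r / t) * (a l * u l ^ 2) := by
    intro l hl
    have h1 := hC1 l hl
    have h2 := haIP l hl
    have h3 := sq_nonneg (u l)
    have h4 := mul_le_mul_of_nonneg_right h1 h3
    have h5 := mul_le_mul_of_nonneg_left (mul_le_mul_of_nonneg_right h2 h3) hrt
    nlinarith [h4, h5]
  have hC2' : ∀ j ∈ Q, C * u j ^ 2 ≤ a j * u j ^ 2 - t * (I j * u j ^ 2) := by
    intro j hj
    have h1 := hC2 j hj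
    have h2 := haIQ j hj
    have h3 := sq_nonneg (u j)
    have h4 := mul_le_mul_of_nonneg_right h1 h3
    have h5 := mul_le_mul_of_nonneg_right h2 h3
    nlinarith [h4, h5]
  have cross : (2 / ND) * ∑ l ∈ P, ∑ j ∈ Q, a l * u l * u j
      ≤ (r / t) * ∑ l ∈ P, (a l * u l ^ 2) + t * ∑ j ∈ Q, (I j * u j ^ 2) := by
    have pair : ∀ l ∈ P, ∀ j ∈ Q, (2 / ND) * (a l * u l * u j)
        ≤ (a l * u l ^ 2) * (Dc * M / (t * ND ^ 2) * (1 / I j))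
          + (t / Dc) * (I j * u j ^ 2) := by
      intro l hl j hj
      have hIj := hIQ j hj
      have he : 0 < t * I j * ND / (Dc * M) := by positivity
      set e := t * I j * ND / (Dc * M) with hedef
      have idA : Dc * M / (t * ND ^ 2) * (1 / I j) = 1 / (e * ND) := by
        rw [hedef]; field_simp
      have idB : (t / Dc) * (I j * u j ^ 2) = (M * e / ND) * u j ^ 2 := by
        rw [hedef]; field_simp
      rw [idA, idB]
      have H : 2 * (a l * u l * u j) ≤ (1 / e) * (a l * u l ^ 2) + M * e * u j ^ 2 := by
        have h1 := amgm_div e (u l) (u j) he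
        have h2 := mul_le_mul_of_nonneg_left h1 (ha l hl)
        have h3 : a l * (e * u j ^ 2) ≤ M * (e * u j ^ 2) :=
          mul_le_mul_of_nonneg_right (haM l hl) (by positivity)
        have h4 : a l * (u l ^ 2 / e) = (1 / e) * (a l * u l ^ 2) := by ring
        nlinarith [h2, h3]
      calc (2 / ND) * (a l * u l * u j) = (2 * (a l * u l * u j)) / ND := by ring
        _ ≤ ((1 / e) * (a l * u l ^ 2) + M * e * u j ^ 2) / ND := by
            gcongr
        _ = (a l * u l ^ 2) * (1 / (e * ND)) + (M * e / ND) * u j ^ 2 := by ring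
    have sum1 : ∑ l ∈ P, ∑ j ∈ Q, (2 / ND) * (a l * u l * u j)
        ≤ ∑ l ∈ P, ∑ j ∈ Q, ((a l * u l ^ 2) * (Dc * M / (t * ND ^ 2) * (1 / I j))
            + (t / Dc) * (I j * u j ^ 2)) :=
      Finset.sum_le_sum fun l hl => Finset.sum_le_sum fun j hj => pair l hl j hj
    have eL : (2 / ND) * ∑ l ∈ P, ∑ j ∈ Q, a l * u l * u j
        = ∑ l ∈ P, ∑ j ∈ Q, (2 / ND) * (a l * u l * u j) := by
      simp [Finset.mul_sum]
    have eR : ∑ l ∈ P, ∑ j ∈ Q, ((a l * u l ^ 2) * (Dc * M / (t * ND ^ 2) * (1 / I j))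
            + (t / Dc) * (I j * u j ^ 2))
        = (r / t) * ∑ l ∈ P, (a l * u l ^ 2) + t * ∑ j ∈ Q, (I j * u j ^ 2) := by
      simp only [Finset.sum_add_distrib, Finset.sum_const, nsmul_eq_mul,
        ← Finset.sum_mul, ← Finset.mul_sum]
      rw [hr]
      field_simp
      ring
    rw [eL, ← eR]
    exact sum1
  have sP : C * ∑ l ∈ P, u l ^ 2 ≤ (1 - r / t) * ∑ l ∈ P, (a l * u l ^ 2) := by
    rw [Finset.mul_sum, Finset.mul_sum]
    exact Finset.sum_le_sum hC1'
  have sQ : C * ∑ j ∈ Q, u j ^ 2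
      ≤ ∑ j ∈ Q, (a j * u j ^ 2) - t * ∑ j ∈ Q, (I j * u j ^ 2) := by
    rw [Finset.mul_sum]
    have h := Finset.sum_le_sum hC2'
    rw [Finset.sum_sub_distrib] at h
    rw [Finset.mul_sum]
    simpa using h
  linarith [cross, sP, sQ]

/-- T-coercivity estimate for general multiphase equilateral star networks
(Theorem 2.3, second case). -/
theorem stmt_5 (N D : ℕ) (hD : 1 ≤ D) (hDN : D < N) (L : ℝ) (hL : 0 < L)
    (k : ℕ → ℝ → ℝ)
    (hkc : ∀ l ∈ Finset.Icc 1 N, ContinuousOn (k l) (Set.Icc 0 L))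
    (hkpos : ∀ l ∈ Finset.Icc 1 D, ∀ x ∈ Set.Icc (0 : ℝ) L, 0 < k l x)
    (hkneg : ∀ l ∈ Finset.Icc (D + 1) N, ∀ x ∈ Set.Icc (0 : ℝ) L, k l x < 0)
    (I S : ℕ → ℝ)
    (hI : ∀ l ∈ Finset.Icc 1 N, 0 < I l) (hS : ∀ l ∈ Finset.Icc 1 N, 0 < S l)
    (hbound : ∀ l ∈ Finset.Icc 1 N, ∀ x ∈ Set.Icc (0 : ℝ) L,
        I l ≤ |k l x| ∧ |k l x| ≤ S l)
    (hmax : ((Finset.Icc 1 D).sup' (Finset.nonempty_Icc.mpr (by omega)) S) *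
        (∑ l ∈ Finset.Icc (D + 1) N, 1 / I l) < ((N : ℝ) - (D : ℝ)) ^ 2 / (D : ℝ)) :
    ∃ C : ℝ, 0 < C ∧ ∀ g : ℕ → ℝ → ℝ,
      (∀ l ∈ Finset.Icc 1 N, ContinuousOn (g l) (Set.Icc 0 L)) →
      (∑ l ∈ Finset.Icc 1 N, ∫ x in (0 : ℝ)..L, |k l x| * (g l x) ^ 2)
        - (2 / ((N : ℝ) - (D : ℝ))) * (∑ l ∈ Finset.Icc 1 D, ∑ j ∈ Finset.Icc (D + 1) N,
            ∫ x in (0 : ℝ)..L, |k l x| * g l x * g j x)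
      ≥ C * ∑ l ∈ Finset.Icc 1 N, ∫ x in (0 : ℝ)..L, (g l x) ^ 2 := by
  have hPne : (Finset.Icc 1 D).Nonempty := Finset.nonempty_Icc.mpr hD
  have hQne : (Finset.Icc (D + 1) N).Nonempty := Finset.nonempty_Icc.mpr (by omega)
  have hNne : (Finset.Icc 1 N).Nonempty := Finset.nonempty_Icc.mpr (by omega)
  have hPsub : ∀ l ∈ Finset.Icc 1 D, l ∈ Finset.Icc 1 N := by
    intro l hl; rw [Finset.mem_Icc] at *; omega
  have hQsub : ∀ l ∈ Finset.Icc (D + 1) N, l ∈ Finset.Icc 1 N := by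
    intro l hl; rw [Finset.mem_Icc] at *; omega
  set ND : ℝ := (N : ℝ) - (D : ℝ) with hNDdef
  have hND : 0 < ND := by
    have : (D : ℝ) < (N : ℝ) := by exact_mod_cast hDN
    simp only [hNDdef]; linarith
  set M : ℝ := (Finset.Icc 1 D).sup' hPne S with hMdef
  have hMpos : 0 < M :=
    lt_of_lt_of_le (hS 1 (Finset.mem_Icc.mpr ⟨le_refl 1, by omega⟩))
      (Finset.le_sup' S (Finset.mem_Icc.mpr ⟨le_refl 1, hD⟩))
  set s : ℝ := ∑ j ∈ Finset.Icc (D + 1) N, 1 / I j with hsdef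
  have hs0 : 0 ≤ s :=
    Finset.sum_nonneg fun j hj => one_div_nonneg.mpr (hI j (hQsub j hj)).le
  set r : ℝ := (D : ℝ) * M * s / ND ^ 2 with hrdef
  have hr0 : 0 ≤ r :=
    div_nonneg (mul_nonneg (mul_nonneg (Nat.cast_nonneg D) hMpos.le) hs0) (sq_nonneg ND)
  have hmax' : M * s < ND ^ 2 / (D : ℝ) := hmax
  have hr1 : r < 1 := by
    rw [hrdef, div_lt_one (by positivity)]
    have hD' : (0:ℝ) < (D : ℝ) := by exact_mod_cast hD
    have h2 : M * s * (D : ℝ) < ND ^ 2 := (lt_div_iff₀ hD').mp hmax'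
    nlinarith
  set t : ℝ := (1 + r) / 2 with htdef
  have ht : 0 < t := by rw [htdef]; linarith
  have ht1 : t < 1 := by rw [htdef]; linarith
  have hrt : r < t := by rw [htdef]; linarith
  have h1rt : 0 < 1 - r / t := by
    have : r / t < 1 := (div_lt_one ht).mpr hrt
    linarith
  set Imin : ℝ := (Finset.Icc 1 N).inf' hNne I with hImindef
  have hImin : 0 < Imin := (Finset.lt_inf'_iff hNne).mpr fun l hl => hI l hl
  have hIminle : ∀ l ∈ Finset.Icc 1 N, Imin ≤ I l := fun l hl => Finset.inf'_le I hl
  set C : ℝ := min (1 - r / t) (1 - t) * Imin with hCdef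
  have hCpos : 0 < C := mul_pos (lt_min h1rt (by linarith)) hImin
  have hC1 : ∀ l ∈ Finset.Icc 1 D, C ≤ (1 - r / t) * I l := by
    intro l hl
    calc C ≤ (1 - r / t) * Imin :=
          mul_le_mul_of_nonneg_right (min_le_left _ _) hImin.le
      _ ≤ (1 - r / t) * I l :=
          mul_le_mul_of_nonneg_left (hIminle l (hPsub l hl)) h1rt.le
  have hC2 : ∀ j ∈ Finset.Icc (D + 1) N, C ≤ (1 - t) * I j := by
    intro j hj
    calc C ≤ (1 - t) * Imin :=
          mul_le_mul_of_nonneg_right (min_le_right _ _) hImin.le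
      _ ≤ (1 - t) * I j :=
          mul_le_mul_of_nonneg_left (hIminle j (hQsub j hj)) (by linarith)
  have hsplit : ∀ f : ℕ → ℝ, ∑ l ∈ Finset.Icc 1 N, f l
      = ∑ l ∈ Finset.Icc 1 D, f l + ∑ l ∈ Finset.Icc (D + 1) N, f l := by
    intro f
    have e1 : Finset.Icc 1 N = Finset.Ioc 0 N := by
      ext x; simp [Finset.mem_Icc, Finset.mem_Ioc]; omega
    have e2 : Finset.Icc 1 D = Finset.Ioc 0 D := by
      ext x; simp [Finset.mem_Icc, Finset.mem_Ioc]; omega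
    have e3 : Finset.Icc (D + 1) N = Finset.Ioc D N := by
      ext x; simp [Finset.mem_Icc, Finset.mem_Ioc]
    rw [e1, e2, e3]
    exact (Finset.sum_Ioc_consecutive f (Nat.zero_le D) hDN.le).symm
  refine ⟨C, hCpos, ?_⟩
  intro g hg
  -- integrability
  have hii : ∀ f : ℝ → ℝ, ContinuousOn f (Set.Icc 0 L) → IntervalIntegrable f MeasureTheory.volume 0 L := by
    intro f hf
    apply ContinuousOn.intervalIntegrable
    rwa [Set.uIcc_of_le hL.le]
  have hc1 : ∀ l ∈ Finset.Icc 1 N, ContinuousOn (fun x => |k l x| * g l x ^ 2) (Set.Icc 0 L) :=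
    fun l hl => ((hkc l hl).abs).mul ((hg l hl).pow 2)
  have hc2 : ∀ l ∈ Finset.Icc 1 D, ∀ j ∈ Finset.Icc (D + 1) N,
      ContinuousOn (fun x => |k l x| * g l x * g j x) (Set.Icc 0 L) :=
    fun l hl j hj => (((hkc l (hPsub l hl)).abs).mul (hg l (hPsub l hl))).mul (hg j (hQsub j hj))
  have hc3 : ∀ l ∈ Finset.Icc 1 N, ContinuousOn (fun x => g l x ^ 2) (Set.Icc 0 L) :=
    fun l hl => (hg l hl).pow 2
  have hc1s : ContinuousOn (fun x => ∑ l ∈ Finset.Icc 1 N, |k l x| * g l x ^ 2) (Set.Icc 0 L) :=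
    continuousOn_finset_sum _ hc1
  have hc2s : ContinuousOn (fun x => ∑ l ∈ Finset.Icc 1 D, ∑ j ∈ Finset.Icc (D + 1) N,
      |k l x| * g l x * g j x) (Set.Icc 0 L) :=
    continuousOn_finset_sum _ fun l hl => continuousOn_finset_sum _ fun j hj => hc2 l hl j hj
  have hc3s : ContinuousOn (fun x => ∑ l ∈ Finset.Icc 1 N, g l x ^ 2) (Set.Icc 0 L) :=
    continuousOn_finset_sum _ hc3
  have hi1s := hii _ hc1s
  have hi2s := hii _ hc2s
  have hi3s := hii _ hc3s
  -- pointwise inequality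
  have hpt : ∀ x ∈ Set.Icc (0:ℝ) L,
      0 ≤ (∑ l ∈ Finset.Icc 1 N, |k l x| * g l x ^ 2)
        - (2 / ND) * (∑ l ∈ Finset.Icc 1 D, ∑ j ∈ Finset.Icc (D + 1) N,
            |k l x| * g l x * g j x)
        - C * ∑ l ∈ Finset.Icc 1 N, g l x ^ 2 := by
    intro x hx
    have key := pointwise_key (Finset.Icc 1 D) (Finset.Icc (D + 1) N)
      (fun l => |k l x|) (fun l => g l x) I M t C ND r hND hMpos ht
      (by rw [Nat.card_Icc]; simp; exact_mod_cast hD)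
      (by rw [Nat.card_Icc]; simp [hrdef, hsdef])
      (fun l hl => abs_nonneg _)
      (fun l hl => le_trans (hbound l (hPsub l hl) x hx).2 (Finset.le_sup' S hl))
      (fun l hl => (hbound l (hPsub l hl) x hx).1)
      (fun j hj => (hbound j (hQsub j hj) x hx).1)
      (fun j hj => hI j (hQsub j hj))
      h1rt.le hC1 hC2
    rw [hsplit (fun l => |k l x| * g l x ^ 2), hsplit (fun l => g l x ^ 2)]
    linarith [key]
  have hint : 0 ≤ ∫ x in (0:ℝ)..L,
      ((∑ l ∈ Finset.Icc 1 N, |k l x| * g l x ^ 2)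
        - (2 / ND) * (∑ l ∈ Finset.Icc 1 D, ∑ j ∈ Finset.Icc (D + 1) N,
            |k l x| * g l x * g j x)
        - C * ∑ l ∈ Finset.Icc 1 N, g l x ^ 2) :=
    intervalIntegral.integral_nonneg hL.le hpt
  have heq : (∫ x in (0:ℝ)..L,
      ((∑ l ∈ Finset.Icc 1 N, |k l x| * g l x ^ 2)
        - (2 / ND) * (∑ l ∈ Finset.Icc 1 D, ∑ j ∈ Finset.Icc (D + 1) N,
            |k l x| * g l x * g j x)
        - C * ∑ l ∈ Finset.Icc 1 N, g l x ^ 2))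
      = (∑ l ∈ Finset.Icc 1 N, ∫ x in (0:ℝ)..L, |k l x| * g l x ^ 2)
        - (2 / ND) * (∑ l ∈ Finset.Icc 1 D, ∑ j ∈ Finset.Icc (D + 1) N,
            ∫ x in (0:ℝ)..L, |k l x| * g l x * g j x)
        - C * ∑ l ∈ Finset.Icc 1 N, ∫ x in (0:ℝ)..L, g l x ^ 2 := by
    rw [intervalIntegral.integral_sub ((hi1s.sub (hi2s.const_mul _))) (hi3s.const_mul _),
      intervalIntegral.integral_sub hi1s (hi2s.const_mul _),
      intervalIntegral.integral_const_mul, intervalIntegral.integral_const_mul,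
      intervalIntegral.integral_finset_sum (fun l hl => hii _ (hc1 l hl)),
      intervalIntegral.integral_finset_sum (fun l hl => hii _
        (continuousOn_finset_sum _ fun j hj => hc2 l hl j hj)),
      intervalIntegral.integral_finset_sum (fun l hl => hii _ (hc3 l hl)),
      Finset.sum_congr rfl (fun l hl =>
        intervalIntegral.integral_finset_sum (fun j hj => hii _ (hc2 l hl j hj)))]
  rw [heq] at hint
  have : (2 / ((N : ℝ) - (D : ℝ))) = 2 / ND := by rw [hNDdef]
  rw [this]
  linarith [hint]
end
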